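/- Let (U,V) be a matching vector family in Z_m^n of size t ≥ 3m, and let ω = exp(2πi/m) be a primitive m-th root of unity. Then there exists some j with 1 ≤ j ≤ m−1 such that D_{ω^j}(U,V) ≥ 2/(3 m^{3/2}). -/

import Mathlib

open Finset

/-- Inner product of two vectors in `(ZMod m)^n`. -/
def mvInner {m n : ℕ} (u v : Fin n → ZMod m) : ZMod m := ∑ k, u k * v k

/-- `(U, V)` is a matching vector family of size `t` in `(ZMod m)^n`. -/
def IsMVFamily (m n t : ℕ) (U V : Fin t → Fin n → ZMod m) : Prop :=
  (∀ i, mvInner (U i) (V i) = 0) ∧ ∀ i j : Fin t, i ≠ j → mvInner (U i) (V j) ≠ 0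

/-- The duality measure `D_ω(U,V) = |E_{i,j}[ω^{⟨u_i, v_j⟩}]|`. -/
noncomputable def dualMeasure {m n t : ℕ} (ω : ℂ) (U V : Fin t → Fin n → ZMod m) : ℝ :=
  ‖((∑ i : Fin t, ∑ j : Fin t, ω ^ (mvInner (U i) (V j)).val) /
    ((t : ℂ) * (t : ℂ)))‖

/-- Lemma 6.2: an MV family of size at least `3m` has a biased character:
`D_{ω^j}(U,V) ≥ 2/(3 m^{3/2})` for some `1 ≤ j ≤ m-1`, where `ω = exp(2πi/m)`. -/
theorem mv_family_biased_character (m n t : ℕ) (hm : 2 ≤ m) (ht : 3 * m ≤ t)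
    (U V : Fin t → Fin n → ZMod m) (hMV : IsMVFamily m n t U V) :
    ∃ j : ℕ, 1 ≤ j ∧ j ≤ m - 1 ∧
      2 / (3 * (m : ℝ) ^ ((3 : ℝ) / 2)) ≤
        dualMeasure (Complex.exp (2 * Real.pi * Complex.I / (m : ℂ)) ^ j) U V := by
  classical
  have hm0 : m ≠ 0 := by omega
  have ht6 : 6 ≤ t := by omega
  set ω : ℂ := Complex.exp (2 * Real.pi * Complex.I / (m : ℂ)) with hω
  have hprim : IsPrimitiveRoot ω m := Complex.isPrimitiveRoot_exp m hm0
  set S : ℕ → ℂ :=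
    fun j => ∑ i : Fin t, ∑ i' : Fin t, (ω ^ j) ^ (mvInner (U i) (V i')).val with hS
  -- Orthogonality of characters
  have horth : ∀ a : ZMod m,
      ∑ j ∈ Finset.range m, (ω ^ j) ^ a.val = if a = 0 then (m : ℂ) else 0 := by
    intro a
    have hrw : ∀ j, (ω ^ j) ^ a.val = (ω ^ a.val) ^ j := by
      intro j; rw [← pow_mul, ← pow_mul, Nat.mul_comm]
    simp_rw [hrw]
    by_cases ha : a = 0
    · simp [ha]
    · rw [if_neg ha]
      haveI : NeZero m := ⟨hm0⟩
      have hvpos : 0 < a.val := by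
        rcases Nat.eq_zero_or_pos a.val with h | h
        · exact absurd ((ZMod.val_eq_zero a).mp h) ha
        · exact h
      have hne : ω ^ a.val ≠ 1 :=
        hprim.pow_ne_one_of_pos_of_lt hvpos.ne' (ZMod.val_lt a)
      have hpm : (ω ^ a.val) ^ m = 1 := by
        rw [← pow_mul, mul_comm, pow_mul, hprim.pow_eq_one, one_pow]
      rw [geom_sum_eq hne, hpm]
      simp
  -- total sum over all characters
  have hsum_range : ∑ j ∈ Finset.range m, S j = (t : ℂ) * m := by
    calc ∑ j ∈ Finset.range m, S j
        = ∑ i : Fin t, ∑ j ∈ Finset.range m, ∑ i' : Fin t,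
            (ω ^ j) ^ (mvInner (U i) (V i')).val := Finset.sum_comm
      _ = ∑ i : Fin t, ∑ i' : Fin t, ∑ j ∈ Finset.range m,
            (ω ^ j) ^ (mvInner (U i) (V i')).val :=
          Finset.sum_congr rfl fun i _ => Finset.sum_comm
      _ = ∑ i : Fin t, ∑ i' : Fin t,
            (if mvInner (U i) (V i') = 0 then (m : ℂ) else 0) := by
          simp_rw [horth]
      _ = ∑ _i : Fin t, (m : ℂ) := by
          refine Finset.sum_congr rfl fun i _ => ?_
          rw [Finset.sum_eq_single i]
          · rw [if_pos (hMV.1 i)]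
          · intro b _ hb
            exact if_neg (hMV.2 i b (Ne.symm hb))
          · intro h; exact absurd (Finset.mem_univ i) h
      _ = (t : ℂ) * m := by simp [mul_comm]
  have hS0 : S 0 = (t : ℂ) * t := by
    simp [hS]
  have hsplit : ∑ j ∈ Finset.Ico 1 m, S j = (t : ℂ) * m - (t : ℂ) * t := by
    have h := Finset.sum_eq_sum_Ico_succ_bot (Nat.pos_of_ne_zero hm0) S
    rw [← Finset.range_eq_Ico, hsum_range, hS0] at h
    norm_num at h
    linear_combination -h
  -- real quantities
  set T : ℝ := (t : ℝ) with hT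
  set M : ℝ := (m : ℝ) ^ ((3 : ℝ) / 2) with hM
  have hmR : (2 : ℝ) ≤ (m : ℝ) := by exact_mod_cast hm
  have hTm : 3 * (m : ℝ) ≤ T := by
    have : ((3 * m : ℕ) : ℝ) ≤ ((t : ℕ) : ℝ) := Nat.cast_le.mpr ht
    push_cast at this; exact this
  have hmM : (m : ℝ) ≤ M := by
    have := Real.rpow_le_rpow_of_exponent_le (x := (m : ℝ))
      (by linarith) (show (1 : ℝ) ≤ 3 / 2 by norm_num)
    rwa [Real.rpow_one] at this
  have hM0 : 0 < M := by linarith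
  have hT0 : 0 < T := by linarith
  -- abs of the off-principal sum
  have habs : ‖∑ j ∈ Finset.Ico 1 m, S j‖ = T * T - T * (m : ℝ) := by
    rw [hsplit]
    have : (t : ℂ) * m - (t : ℂ) * t = (((t : ℝ) * m - (t : ℝ) * t : ℝ) : ℂ) := by
      push_cast; ring
    rw [this, Complex.norm_real, Real.norm_eq_abs, abs_of_nonpos (by nlinarith)]
    ring
  have htri : T * T - T * (m : ℝ) ≤ ∑ j ∈ Finset.Ico 1 m, ‖S j‖ := by
    rw [← habs]; exact norm_sum_le _ _
  -- the per-term target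
  have hcard : ((Finset.Ico 1 m).card : ℝ) = (m : ℝ) - 1 := by
    rw [Nat.card_Ico]
    have : (1 : ℕ) ≤ m := by omega
    push_cast [this]
    ring
  have hkey : ((m : ℝ) - 1) * (2 / (3 * M) * (T * T)) ≤ T * T - T * (m : ℝ) := by
    rw [show ((m : ℝ) - 1) * (2 / (3 * M) * (T * T)) =
        (2 * ((m : ℝ) - 1) * (T * T)) / (3 * M) by ring, div_le_iff₀ (by positivity)]
    nlinarith [mul_nonneg (mul_nonneg (sub_nonneg.mpr hmM) hT0.le) hT0.le,
      mul_nonneg (mul_nonneg (show (0:ℝ) ≤ M by linarith) hT0.le)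
        (show (0:ℝ) ≤ T - 3 * (m:ℝ) by linarith)]
  have hsumle : ∑ j ∈ Finset.Ico 1 m, (2 / (3 * M) * (T * T)) ≤
      ∑ j ∈ Finset.Ico 1 m, ‖S j‖ := by
    rw [Finset.sum_const, nsmul_eq_mul, hcard]
    exact le_trans hkey htri
  obtain ⟨j, hjmem, hjle⟩ := Finset.exists_le_of_sum_le
    (Finset.nonempty_Ico.mpr (by omega)) hsumle
  rw [Finset.mem_Ico] at hjmem
  refine ⟨j, hjmem.1, by omega, ?_⟩
  have hdm : dualMeasure (ω ^ j) U V = ‖S j‖ / (T * T) := by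
    unfold dualMeasure
    rw [norm_div, norm_mul, Complex.norm_natCast]
  rw [hω] at hdm
  rw [hdm, le_div_iff₀ (by positivity), div_mul_eq_mul_div, div_le_iff₀ (by positivity)]
  rw [div_mul_eq_mul_div, div_le_iff₀ (by positivity)] at hjle
  linarith
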